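/- The 8×8 matrix M over ℤ₁₃ with rows (3, −2, −1, −1, −1, −1, −1, −1), (2, 3, −1, 1, −1, 1, 1, −1), (1, 1, 3, −2, −1, −1, 1, 1), (1, −1, 2, 3, −1, 1, −1, 1), (1, 1, 1, 1, 3, −2, −1, −1), (1, −1, 1, −1, 2, 3, 1, −1), (1, −1, −1, 1, 1, −1, 3, 2), (1, 1, −1, −1, 1, 1, −2, 3) satisfies M¹³ = M, i.e., M is a 13-potent matrix over ℤ₁₃. -/

import Mathlib

open Matrix

private lemma poly_key {R : Type*} [Ring R] (M : R) : M ^ 13 - M = (M ^ 2 - 6 * M + 6) *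
    (M^11 + 6*M^10 + 30*M^9 + 144*M^8 + 684*M^7 + 3240*M^6 + 15336*M^5 + 72576*M^4
      + 343440*M^3 + 1625184*M^2 + 7690464*M + 36391680)
    + 13 * (13246715 * M - 16796160) := by
  noncomm_ring
  norm_num

/-- The 8×8 matrix over `ℤ₁₃` given by the left octonion representation of
`x = 3 + 2f₁ + f₂ + f₃ + f₄ + f₅ + f₆ + f₇ ∈ 𝕆(-1,-1,-1)` satisfies `M¹³ = M`,
i.e. `M` is a `13`-potent matrix. -/
theorem zmod13_matrix_thirteen_potent :
    (!![3, -2, -1, -1, -1, -1, -1, -1;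
        2,  3, -1,  1, -1,  1,  1, -1;
        1,  1,  3, -2, -1, -1,  1,  1;
        1, -1,  2,  3, -1,  1, -1,  1;
        1,  1,  1,  1,  3, -2, -1, -1;
        1, -1,  1, -1,  2,  3,  1, -1;
        1, -1, -1,  1,  1, -1,  3,  2;
        1,  1, -1, -1,  1,  1, -2,  3] : Matrix (Fin 8) (Fin 8) (ZMod 13)) ^ 13 =
    (!![3, -2, -1, -1, -1, -1, -1, -1;
        2,  3, -1,  1, -1,  1,  1, -1;
        1,  1,  3, -2, -1, -1,  1,  1;
        1, -1,  2,  3, -1,  1, -1,  1;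
        1,  1,  1,  1,  3, -2, -1, -1;
        1, -1,  1, -1,  2,  3,  1, -1;
        1, -1, -1,  1,  1, -1,  3,  2;
        1,  1, -1, -1,  1,  1, -2,  3] : Matrix (Fin 8) (Fin 8) (ZMod 13)) := by
  set M : Matrix (Fin 8) (Fin 8) (ZMod 13) :=
    !![3, -2, -1, -1, -1, -1, -1, -1;
        2,  3, -1,  1, -1,  1,  1, -1;
        1,  1,  3, -2, -1, -1,  1,  1;
        1, -1,  2,  3, -1,  1, -1,  1;
        1,  1,  1,  1,  3, -2, -1, -1;
        1, -1,  1, -1,  2,  3,  1, -1;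
        1, -1, -1,  1,  1, -1,  3,  2;
        1,  1, -1, -1,  1,  1, -2,  3] with hM
  clear_value M
  have h1 : M * M = !![12, 1, 7, 7, 7, 7, 7, 7;
       12, 12, 7, 6, 7, 6, 6, 7;
       6, 6, 12, 1, 7, 7, 6, 6;
       6, 7, 12, 12, 7, 6, 7, 6;
       6, 6, 6, 6, 12, 1, 7, 7;
       6, 7, 6, 7, 12, 12, 6, 7;
       6, 7, 7, 6, 6, 7, 12, 12;
       6, 6, 7, 7, 6, 6, 1, 12] := by
    rw [hM]
    set_option maxRecDepth 10000 in
    set_option maxHeartbeats 1000000 in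
    decide
  have h2 : (!![12, 1, 7, 7, 7, 7, 7, 7;
       12, 12, 7, 6, 7, 6, 6, 7;
       6, 6, 12, 1, 7, 7, 6, 6;
       6, 7, 12, 12, 7, 6, 7, 6;
       6, 6, 6, 6, 12, 1, 7, 7;
       6, 7, 6, 7, 12, 12, 6, 7;
       6, 7, 7, 6, 6, 7, 12, 12;
       6, 6, 7, 7, 6, 6, 1, 12] : Matrix (Fin 8) (Fin 8) (ZMod 13)) = 6 * M - 6 := by
    rw [hM]
    set_option maxRecDepth 10000 in
    set_option maxHeartbeats 1000000 in
    decide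
  have h : M ^ 2 - 6 * M + 6 = 0 := by
    rw [pow_two, h1, h2]; noncomm_ring
  have h13 : (13 : Matrix (Fin 8) (Fin 8) (ZMod 13)) = 0 := by
    have : ((13:ℕ) : ZMod 13) = 0 := by decide
    simpa using CharP.cast_eq_zero (Matrix (Fin 8) (Fin 8) (ZMod 13)) 13
  have key : M ^ 13 - M = (M ^ 2 - 6 * M + 6) *
      (M^11 + 6*M^10 + 30*M^9 + 144*M^8 + 684*M^7 + 3240*M^6 + 15336*M^5 + 72576*M^4
        + 343440*M^3 + 1625184*M^2 + 7690464*M + 36391680)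
      + 13 * (13246715 * M - 16796160) := poly_key M
  rw [h, h13, zero_mul, zero_mul, add_zero, sub_eq_zero] at key
  exact key
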